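/- Suppose that on the whole interval (t₁, t₂) one has a(t) − |b(t)| > η (i.e., (t₁,t₂) = S_η(t₁,t₂)). Then for any M̃ ≥ M₀(t₁), a solution x of the delay inequality satisfies |x(t₂)| ≤ max{δ M̃, |x(t₁)| − (η/2) μ(S_η(t₁,t₂)) M̃}, where δ = 1 − η/(2 M_a), μ is Lebesgue measure, and M₀(t) = sup_{t−τ_max ≤ s ≤ t} |x(s)|. -/

import Mathlib

/-- Upper right Dini derivative `D⁺f(t) = limsup_{h → 0⁺} (f(t+h) - f(t))/h`. -/
noncomputable def DiniUpper (f : ℝ → ℝ) (t : ℝ) : EReal :=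
  Filter.limsup (fun h : ℝ => (((f (t + h) - f t) / h : ℝ) : EReal))
    (nhdsWithin 0 (Set.Ioi 0))

/-- The maximal function `M₀(t) = sup_{t-τ_max ≤ s ≤ t} |x(s)|`. -/
noncomputable def M0 (x : ℝ → ℝ) (τmax t : ℝ) : ℝ :=
  sSup ((fun s => |x s|) '' Set.Icc (t - τmax) t)

/-- **Lemma 3, case 2.** Suppose `a(t) - |b(t)| > η` on the whole interval `(t₁,t₂)`
(i.e. `(t₁,t₂) = S_η(t₁,t₂)`). Then, with `δ = 1 - η/(2M_a)`, for any `M̃ ≥ M₀(t₁)` a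
solution of `D⁺|x(t)| ≤ -a(t)|x(t)| + b(t) sup_{t-τ_max ≤ s ≤ t} |x(s)|` satisfies
`|x(t₂)| ≤ max{δ M̃, |x(t₁)| - (η/2) μ(S_η(t₁,t₂)) M̃}`. -/
lemma dini_step (f : ℝ → ℝ) (c r r' : ℝ) (h : DiniUpper f c ≤ (r : EReal)) (hr : r < r') :
    ∃ u > 0, ∀ h' ∈ Set.Ioo (0:ℝ) u, f (c + h') < f c + r' * h' := by
  have h2 : DiniUpper f c < (r' : EReal) :=
    lt_of_le_of_lt h (by exact_mod_cast hr)
  have h3 : ∀ᶠ h' in nhdsWithin (0:ℝ) (Set.Ioi 0),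
      (((f (c + h') - f c) / h' : ℝ) : EReal) < (r' : EReal) :=
    Filter.eventually_lt_of_limsup_lt h2
  rw [Filter.eventually_iff] at h3
  obtain ⟨u, hu, hsub⟩ := mem_nhdsGT_iff_exists_Ioo_subset.mp h3
  refine ⟨u, hu, fun h' hh' => ?_⟩
  have := hsub hh'
  simp only [Set.mem_setOf_eq, EReal.coe_lt_coe_iff] at this
  have h'pos : 0 < h' := hh'.1
  nlinarith [(div_lt_iff₀ h'pos).mp this]

lemma stay_below (f B : ℝ → ℝ) (hf : Continuous f) (hB : Continuous B) (t' t₂ : ℝ)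
    (h0 : f t' < B t')
    (key : ∀ c ∈ Set.Ioo t' t₂, (∀ s ∈ Set.Icc t' c, f s ≤ B s) → f c = B c →
      ∃ u > c, ∀ z ∈ Set.Ioo c u, f z < B z) :
    ∀ t ∈ Set.Icc t' t₂, f t ≤ B t := by
  intro t ht
  have ht' : t' ≤ t₂ := le_trans ht.1 ht.2
  set S : Set ℝ := {u | u ∈ Set.Icc t' t₂ ∧ ∀ s ∈ Set.Icc t' u, f s ≤ B s} with hS
  have hSne : t' ∈ S := by
    refine ⟨⟨le_refl _, ht'⟩, fun s hs => ?_⟩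
    have : s = t' := le_antisymm hs.2 hs.1
    rw [this]; exact h0.le
  have hSbdd : BddAbove S := ⟨t₂, fun u hu => hu.1.2⟩
  set c := sSup S with hc
  have hct' : t' ≤ c := le_csSup hSbdd hSne
  have hct₂ : c ≤ t₂ := csSup_le ⟨t', hSne⟩ (fun u hu => hu.1.2)
  have hmem : ∀ s ∈ Set.Icc t' c, f s ≤ B s := by
    intro s hs
    rcases lt_or_eq_of_le hs.2 with hlt | heq
    · obtain ⟨u, huS, hsu⟩ := exists_lt_of_lt_csSup ⟨t', hSne⟩ hlt
      exact huS.2 s ⟨hs.1, hsu.le⟩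
    · rw [heq] at hs ⊢
      rcases eq_or_lt_of_le hs.1 with heq2 | hlt2
      · rw [← heq2]; exact h0.le
      · have hcont : Filter.Tendsto (fun z => f z - B z) (nhdsWithin c (Set.Iio c))
            (nhds (f c - B c)) := ((hf.sub hB).tendsto c).mono_left nhdsWithin_le_nhds
        have hev : ∀ᶠ z in nhdsWithin c (Set.Iio c), f z - B z ≤ 0 := by
          filter_upwards [Ioo_mem_nhdsLT_of_mem (show c ∈ Set.Ioc t' c from ⟨hlt2, le_refl _⟩)]
            with z hz
          have : f z ≤ B z := by
            obtain ⟨u, huS, hzu⟩ := exists_lt_of_lt_csSup ⟨t', hSne⟩ hz.2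
            exact huS.2 z ⟨hz.1.le, hzu.le⟩
          linarith
        have := le_of_tendsto hcont hev
        linarith
  have hcS : c ∈ S := ⟨⟨hct', hct₂⟩, hmem⟩
  rcases eq_or_lt_of_le hct₂ with hceq | hclt
  · exact hmem t ⟨ht.1, by rw [hceq]; exact ht.2⟩
  exfalso
  have hz : ∃ z > c, z ∈ S := by
    rcases lt_or_eq_of_le (hmem c ⟨hct', le_refl _⟩) with hflt | hfeq
    · have : ∀ᶠ z in nhds c, f z < B z := by
        have hcont : Continuous fun z => B z - f z := hB.sub hf
        have hpos : 0 < B c - f c := by linarith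
        have := (hcont.tendsto c).eventually (eventually_gt_nhds hpos)
        filter_upwards [this] with z hz; linarith
      obtain ⟨ε, hε, hball⟩ := Metric.eventually_nhds_iff.mp this
      refine ⟨min (c + ε/2) ((c + t₂)/2), ?_, ⟨?_, ?_⟩, ?_⟩
      · apply lt_min <;> [linarith; linarith]
      · exact le_trans hct' (le_of_lt (lt_min (by linarith) (by linarith)))
      · exact le_trans (min_le_right _ _) (by linarith)
      · intro s hs
        rcases le_or_gt s c with h1 | h1
        · exact hmem s ⟨hs.1, h1⟩
        · apply le_of_lt
          apply hball
          have hs2 : s ≤ c + ε/2 := le_trans hs.2 (min_le_left _ _)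
          rw [Real.dist_eq, abs_lt]
          constructor <;> linarith
    · have hcIoo : c ∈ Set.Ioo t' t₂ := by
        refine ⟨?_, hclt⟩
        rcases eq_or_lt_of_le hct' with h1 | h1
        · exfalso; rw [← h1] at hfeq; linarith
        · exact h1
      obtain ⟨u, hu, hlt⟩ := key c hcIoo hmem hfeq
      refine ⟨min ((c + u)/2) ((c + t₂)/2), ?_, ⟨?_, ?_⟩, ?_⟩
      · apply lt_min <;> [linarith; linarith]
      · exact le_trans hct' (le_of_lt (lt_min (by linarith) (by linarith)))
      · exact le_trans (min_le_right _ _) (by linarith)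
      · intro s hs
        rcases le_or_gt s c with h1 | h1
        · exact hmem s ⟨hs.1, h1⟩
        · refine le_of_lt (hlt s ⟨h1, ?_⟩)
          have := le_trans hs.2 (min_le_left _ _)
          linarith
  obtain ⟨z, hzc, hzS⟩ := hz
  have := le_csSup hSbdd hzS
  linarith

theorem estimate_on_Seta (Ma Mb τmax η t₁ t₂ : ℝ) (a b : ℝ → ℝ)
    (hτmax : 0 < τmax) (hη : 0 < η)
    (ha : ∀ t ≥ (0 : ℝ), 0 < a t ∧ a t ≤ Ma)
    (hb : ∀ t ≥ (0 : ℝ), |b t| ≤ Mb)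
    (x φ : ℝ → ℝ) (hxcont : Continuous x)
    (hinit : ∀ s ∈ Set.Icc (-τmax) (0 : ℝ), x s = φ s)
    (hineq : ∀ t ≥ (0 : ℝ), DiniUpper (fun s => |x s|) t ≤
      ((-(a t) * |x t| + b t * sSup ((fun s => |x s|) '' Set.Icc (t - τmax) t) : ℝ) : EReal))
    (ht₁ : 0 ≤ t₁) (ht₁₂ : t₁ < t₂)
    (hSeta : ∀ t ∈ Set.Ioo t₁ t₂, a t - |b t| > η) :
    ∀ Mtilde : ℝ, M0 x τmax t₁ ≤ Mtilde →
      |x t₂| ≤ max ((1 - η / (2 * Ma)) * Mtilde)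
        (|x t₁| - η / 2 *
          (MeasureTheory.volume {t ∈ Set.Ioo t₁ t₂ | a t - |b t| > η}).toReal * Mtilde) := by
  intro Mt hM
  set F := fun s => |x s| with hFdef
  have hF : Continuous F := hxcont.abs
  have hMa : 0 < Ma := lt_of_lt_of_le (ha t₁ ht₁).1 (ha t₁ ht₁).2
  have hbdd : ∀ c : ℝ, BddAbove (F '' Set.Icc (c - τmax) c) :=
    fun c => (isCompact_Icc.image hF).bddAbove
  have hne : ∀ c : ℝ, (F '' Set.Icc (c - τmax) c).Nonempty :=
    fun c => (Set.nonempty_Icc.mpr (by linarith)).image F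
  have hFge : ∀ c : ℝ, F c ≤ sSup (F '' Set.Icc (c - τmax) c) :=
    fun c => le_csSup (hbdd c) ⟨c, ⟨by linarith, le_refl c⟩, rfl⟩
  have hFnonneg : ∀ s, 0 ≤ F s := fun s => abs_nonneg _
  have hM0eq : M0 x τmax t₁ = sSup (F '' Set.Icc (t₁ - τmax) t₁) := rfl
  have hM0 : F t₁ ≤ M0 x τmax t₁ := by rw [hM0eq]; exact hFge t₁
  have hM0nonneg : 0 ≤ M0 x τmax t₁ := le_trans (hFnonneg t₁) hM0
  have hMt0 : 0 ≤ Mt := le_trans hM0nonneg hM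
  have hM0mem : ∀ s ∈ Set.Icc (t₁ - τmax) t₁, F s ≤ M0 x τmax t₁ := by
    intro s hs
    rw [hM0eq]
    exact le_csSup (hbdd t₁) ⟨s, hs, rfl⟩
  -- the fundamental Dini inequality with a real-valued bound
  have dini_bound : ∀ c ∈ Set.Ioo t₁ t₂, ∀ K, 0 ≤ K →
      (∀ s ∈ Set.Icc (c - τmax) c, F s ≤ K) →
      DiniUpper F c ≤ ((-(a c) * F c + |b c| * K : ℝ) : EReal) := by
    intro c hc K hK hist
    have hc0 : (0:ℝ) ≤ c := le_trans ht₁ hc.1.le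
    have h1 := hineq c hc0
    have hMsle : sSup (F '' Set.Icc (c - τmax) c) ≤ K :=
      csSup_le (hne c) (by rintro y ⟨s, hs, rfl⟩; exact hist s hs)
    have hMsge : 0 ≤ sSup (F '' Set.Icc (c - τmax) c) := le_trans (hFnonneg c) (hFge c)
    refine le_trans h1 ?_
    rw [EReal.coe_le_coe_iff]
    have hbM : b c * sSup (F '' Set.Icc (c - τmax) c) ≤ |b c| * K :=
      le_trans (mul_le_mul_of_nonneg_right (le_abs_self _) hMsge)
        (mul_le_mul_of_nonneg_left hMsle (abs_nonneg _))
    linarith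
  -- Step A: the solution stays below any K strictly above M0(t₁)
  have stepA : ∀ K, M0 x τmax t₁ < K → ∀ t ∈ Set.Icc t₁ t₂, F t ≤ K := by
    intro K hK
    have hKpos : 0 < K := lt_of_le_of_lt hM0nonneg hK
    refine stay_below F (fun _ => K) hF continuous_const t₁ t₂
      (lt_of_le_of_lt hM0 hK) ?_
    intro c hc hist hceq
    have histM : ∀ s ∈ Set.Icc (c - τmax) c, F s ≤ K := by
      intro s hs
      rcases le_or_gt s t₁ with h1 | h1
      · exact le_trans (hM0mem s ⟨by linarith [hc.1, hs.1], h1⟩) hK.le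
      · exact hist s ⟨h1.le, hs.2⟩
    have hd := dini_bound c hc K hKpos.le histM
    have hS := hSeta c hc
    have hr : -(a c) * F c + |b c| * K < 0 := by
      rw [hceq]; nlinarith
    obtain ⟨u, hu, hlt⟩ := dini_step F c _ 0 hd hr
    refine ⟨c + u, by linarith, fun z hz => ?_⟩
    have h2 := hlt (z - c) ⟨by linarith [hz.1], by linarith [hz.2]⟩
    have h3 : c + (z - c) = z := by ring
    rw [h3] at h2
    rw [hceq] at h2
    linarith
  have hxM : ∀ t ∈ Set.Icc t₁ t₂, F t ≤ Mt := by
    intro t ht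
    refine le_of_forall_pos_le_add fun ε hε => ?_
    exact stepA (Mt + ε) (by linarith) t ht
  -- history bound by Mt at any c in the interval
  have histMt : ∀ c ∈ Set.Ioo t₁ t₂, ∀ s ∈ Set.Icc (c - τmax) c, F s ≤ Mt := by
    intro c hc s hs
    rcases le_or_gt s t₁ with h1 | h1
    · exact le_trans (hM0mem s ⟨by linarith [hc.1, hs.1], h1⟩) hM
    · exact hxM s ⟨h1.le, le_trans hs.2 hc.2.le⟩
  rcases eq_or_lt_of_le hMt0 with hMt | hMtpos
  · -- Mt = 0
    have h1 : F t₂ ≤ Mt := hxM t₂ ⟨ht₁₂.le, le_refl _⟩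
    apply le_max_of_le_left
    calc |x t₂| ≤ Mt := h1
    _ ≤ (1 - η / (2 * Ma)) * Mt := by rw [← hMt]; simp
  -- Mt > 0
  by_cases hcase : ∃ t' ∈ Set.Icc t₁ t₂, F t' ≤ (1 - η / (2 * Ma)) * Mt
  · -- case ii : once below δ Mt, stay below
    obtain ⟨t', ht', hft'⟩ := hcase
    apply le_max_of_le_left
    have : F t₂ ≤ (1 - η / (2 * Ma)) * Mt := by
      refine le_of_forall_pos_le_add fun ε hε => ?_
      refine stay_below F (fun _ => (1 - η / (2 * Ma)) * Mt + ε) hF continuous_const t' t₂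
        (by simpa using lt_of_le_of_lt hft' (by linarith)) ?_ t₂ ⟨ht'.2, le_refl _⟩
      intro c hc hist hceq
      have hcIoo : c ∈ Set.Ioo t₁ t₂ := ⟨lt_of_le_of_lt ht'.1 hc.1, hc.2⟩
      have hc0 : (0:ℝ) ≤ c := le_trans ht₁ hcIoo.1.le
      have hd := dini_bound c hcIoo Mt hMt0 (histMt c hcIoo)
      have hS := hSeta c hcIoo
      have haMa := (ha c hc0).2
      have hapos := (ha c hc0).1
      have hq : a c * (η / (2 * Ma)) ≤ η / 2 := by
        rw [mul_div_assoc', div_le_iff₀ (by linarith : (0:ℝ) < 2 * Ma)]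
        nlinarith
      have hr : -(a c) * F c + |b c| * Mt < 0 := by
        rw [hceq]; nlinarith
      obtain ⟨u, hu, hlt⟩ := dini_step F c _ 0 hd hr
      refine ⟨c + u, by linarith, fun z hz => ?_⟩
      have h2 := hlt (z - c) ⟨by linarith [hz.1], by linarith [hz.2]⟩
      have h3 : c + (z - c) = z := by ring
      rw [h3] at h2
      rw [hceq] at h2
      linarith
    exact this
  · -- case i : always above δ Mt, linear decay
    push_neg at hcase
    apply le_max_of_le_right
    have hvol : (MeasureTheory.volume {t ∈ Set.Ioo t₁ t₂ | a t - |b t| > η}).toReal = t₂ - t₁ := by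
      have hset : {t ∈ Set.Ioo t₁ t₂ | a t - |b t| > η} = Set.Ioo t₁ t₂ := by
        ext u
        exact ⟨fun h => h.1, fun h => ⟨h, hSeta u h⟩⟩
      rw [hset, Real.volume_Ioo, ENNReal.toReal_ofReal (by linarith)]
    rw [hvol]
    have hlin : ∀ ε > (0:ℝ), F t₂ ≤ F t₁ + ε + (ε - η / 2 * Mt) * (t₂ - t₁) := by
      intro ε hε
      have hBcont : Continuous (fun t => F t₁ + ε + (ε - η / 2 * Mt) * (t - t₁)) := by
        fun_prop
      refine stay_below F (fun t => F t₁ + ε + (ε - η / 2 * Mt) * (t - t₁)) hF hBcont t₁ t₂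
        (by simp; linarith) ?_ t₂ ⟨ht₁₂.le, le_refl _⟩
      intro c hc hist hceq
      have hc0 : (0:ℝ) ≤ c := le_trans ht₁ hc.1.le
      have hd := dini_bound c hc Mt hMt0 (histMt c hc)
      have hS := hSeta c hc
      have haMa := (ha c hc0).2
      have hapos := (ha c hc0).1
      have hq : a c * (η / (2 * Ma)) ≤ η / 2 := by
        rw [mul_div_assoc', div_le_iff₀ (by linarith : (0:ℝ) < 2 * Ma)]
        nlinarith
      have hFc : (1 - η / (2 * Ma)) * Mt < F c := hcase c ⟨hc.1.le, hc.2.le⟩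
      have hr : -(a c) * F c + |b c| * Mt ≤ -(η / 2 * Mt) := by nlinarith
      obtain ⟨u, hu, hlt⟩ := dini_step F c _ (-(η / 2 * Mt) + ε)
        (le_trans hd (by exact_mod_cast hr)) (by linarith)
      refine ⟨c + u, by linarith, fun z hz => ?_⟩
      have h2 := hlt (z - c) ⟨by linarith [hz.1], by linarith [hz.2]⟩
      have h3 : c + (z - c) = z := by ring
      rw [h3] at h2
      have hexp : F t₁ + ε + (ε - η / 2 * Mt) * (z - t₁)
          = F c + (-(η / 2 * Mt) + ε) * (z - c) := by
        rw [hceq]; ring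
      linarith [hexp]
    have hfinal : F t₂ ≤ F t₁ - η / 2 * Mt * (t₂ - t₁) := by
      refine le_of_forall_pos_le_add fun ε' hε' => ?_
      have hC : (0:ℝ) < 1 + (t₂ - t₁) := by linarith
      have hε : 0 < ε' / (1 + (t₂ - t₁)) := div_pos hε' hC
      have h1 := hlin _ hε
      have h2 : ε' / (1 + (t₂ - t₁)) * (1 + (t₂ - t₁)) = ε' := div_mul_cancel₀ _ (ne_of_gt hC)
      nlinarith
    have : η / 2 * (t₂ - t₁) * Mt = η / 2 * Mt * (t₂ - t₁) := by ring
    rw [this]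
    exact hfinal
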